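/- If A and B are real symmetric positive definite n×n matrices with trace(A B⁻¹) = ln det(A B⁻¹) + n, then A = B. -/

import Mathlib

open Matrix
open scoped MatrixOrder

lemma trace_eq_sum_eigenvalues' {n : ℕ} {A : Matrix (Fin n) (Fin n) ℝ} (hA : A.IsHermitian) :
    A.trace = ∑ i, hA.eigenvalues i := by
  nth_rewrite 1 [hA.spectral_theorem]
  rw [Unitary.conjStarAlgAut_apply, Matrix.trace_mul_cycle,
    Matrix.mem_unitaryGroup_iff'.mp hA.eigenvectorUnitary.2, Matrix.one_mul]
  simp [Matrix.trace_diagonal]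

lemma eq_one_of_log_eq_sub_one {x : ℝ} (hx : 0 < x) (h : Real.log x = x - 1) : x = 1 := by
  by_contra hne
  have h1 : x - 1 ≠ 0 := sub_ne_zero.mpr hne
  have h2 := Real.add_one_lt_exp h1
  rw [← h, Real.exp_log hx] at h2
  linarith

theorem eq_of_trace_eq_log_det_add (n : ℕ) (A B : Matrix (Fin n) (Fin n) ℝ)
    (hA : A.PosDef) (hB : B.PosDef)
    (h : (A * B⁻¹).trace = Real.log (A * B⁻¹).det + n) : A = B := by
  classical
  set S := CFC.sqrt B with hSdef
  have hSS : S * S = B := CFC.sqrt_mul_sqrt_self B hB.posSemidef.nonneg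
  have hSH : S.IsHermitian := (CFC.sqrt_nonneg B).posSemidef.isHermitian
  have hdetS : S.det ≠ 0 := by
    intro h0
    have : B.det = 0 := by rw [← hSS, Matrix.det_mul, h0, zero_mul]
    exact hB.det_pos.ne' this
  have hdu : IsUnit S.det := isUnit_iff_ne_zero.mpr hdetS
  have hSinv : S * S⁻¹ = 1 := Matrix.mul_nonsing_inv S hdu
  have hinvS : S⁻¹ * S = 1 := Matrix.nonsing_inv_mul S hdu
  have hSiH : S⁻¹.IsHermitian := hSH.inv
  set C := S⁻¹ * A * S⁻¹ with hCdef
  have hCpd : C.PosDef := by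
    have h1 : ((S⁻¹)ᴴ * A * S⁻¹).PosDef := by
      refine Matrix.PosDef.of_dotProduct_mulVec_pos ?_ ?_
      · exact Matrix.isHermitian_conjTranspose_mul_mul _ hA.isHermitian
      · intro x hx
        have hx' : S⁻¹ *ᵥ x ≠ 0 := by
          intro h0
          apply hx
          have h2 := congrArg (S *ᵥ ·) h0
          simpa [Matrix.mulVec_mulVec, hSinv] using h2
        simpa only [star_mulVec, dotProduct_mulVec, vecMul_vecMul] using hA.dotProduct_mulVec_pos hx'
    rwa [hSiH.eq] at h1
  have hBinv : S⁻¹ * S⁻¹ = B⁻¹ := by rw [← Matrix.mul_inv_rev, hSS]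
  have htr : C.trace = (A * B⁻¹).trace := by
    rw [hCdef, Matrix.trace_mul_cycle, Matrix.trace_mul_comm, hBinv]
  have hdet : C.det = (A * B⁻¹).det := by
    have hd : B⁻¹.det = S⁻¹.det * S⁻¹.det := by rw [← Matrix.det_mul, hBinv]
    rw [hCdef, Matrix.det_mul, Matrix.det_mul, Matrix.det_mul, hd]
    ring
  have h' : C.trace = Real.log C.det + n := by rw [htr, hdet]; exact h
  have hμpos : ∀ i, 0 < hCpd.1.eigenvalues i := hCpd.eigenvalues_pos
  have hdetC : C.det = ∏ i, hCpd.1.eigenvalues i := by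
    have := hCpd.1.det_eq_prod_eigenvalues
    simpa using this
  have hlog : Real.log C.det = ∑ i, Real.log (hCpd.1.eigenvalues i) := by
    rw [hdetC, Real.log_prod (fun i _ => (hμpos i).ne')]
  have ht := trace_eq_sum_eigenvalues' hCpd.1
  have hsum : ∑ i, (hCpd.1.eigenvalues i - 1 - Real.log (hCpd.1.eigenvalues i)) = 0 := by
    have e1 : ∑ i, (hCpd.1.eigenvalues i - 1 - Real.log (hCpd.1.eigenvalues i))
        = (∑ i, hCpd.1.eigenvalues i) - (∑ _i : Fin n, (1:ℝ))
          - ∑ i, Real.log (hCpd.1.eigenvalues i) := by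
      rw [Finset.sum_sub_distrib, Finset.sum_sub_distrib]
    have e2 : (∑ _i : Fin n, (1:ℝ)) = n := by simp
    rw [e1, e2, ← ht, ← hlog]
    linarith
  have hone : ∀ i, hCpd.1.eigenvalues i = 1 := by
    intro i
    have hterm := (Finset.sum_eq_zero_iff_of_nonneg (fun j _ => by
      have := Real.log_le_sub_one_of_pos (hμpos j); linarith)).mp hsum i (Finset.mem_univ i)
    exact eq_one_of_log_eq_sub_one (hμpos i) (by linarith)
  have hC1 : C = 1 := by
    have hsp := hCpd.1.spectral_theorem
    have hdiag : (RCLike.ofReal ∘ hCpd.1.eigenvalues : Fin n → ℝ) = fun _ => 1 :=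
      funext fun i => by simp [hone i]
    rw [hsp, hdiag]
    have : Matrix.diagonal (fun _ : Fin n => (1:ℝ)) = 1 := Matrix.diagonal_one
    rw [this, Unitary.conjStarAlgAut_apply, Matrix.mul_one]
    exact Matrix.mem_unitaryGroup_iff.mp hCpd.1.eigenvectorUnitary.2
  have hA' : S * C * S = A := by
    simp only [hCdef, ← Matrix.mul_assoc]
    rw [hSinv, Matrix.one_mul, Matrix.mul_assoc, hinvS, Matrix.mul_one]
  rw [← hA', hC1, Matrix.mul_one, hSS]
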